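/- Let G = (V, E) be a finite graph and construct the chemical reaction system Q_G as follows: reactions R_V = {r_v : v ∈ V} and R_E = {r'_1, …, r'_{|E|}} (with edges ordered e¹,…,e^{|E|}); r'_j is catalysed exactly by x_u and x_v where e^j = (u,v) and x_w is the product of r_w; each r_v is catalysed only by the product y_{|E|} of r'_{|E|}; the reactants of r'_j include the product y_{j−1} of r'_{j−1} for j > 1, and all other reactants are food. Then G has a vertex cover of size at most K if and only if there is a linear ordering of R_V ∪ R_E in which every reaction's reactants are products of earlier reactions or food, and at most K reactions lack a catalyst among the products of earlier reactions. -/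
import Mathlib


/-- In the CRS `Q_G` built from a graph with vertex set `V` and ordered edges
`e : Fin m → V × V`, the reactions are `Sum.inl v` (the reaction `r_v`) and
`Sum.inr j` (the chain reaction `r'_j`).  Given an injective position function
`pos` describing a linear ordering of the reactions, `violatesP2 pos e r` says
that no catalyst of `r` is a product of an earlier reaction: `r'_j` is catalysed
exactly by `x_u` and `x_v` (the products of `r_u` and `r_v` where `e j = (u, v)`),
and `r_v` is catalysed only by the super-catalyst `y_{m-1}`, the product of the
last chain reaction `r'_{m-1}`. -/
def violatesP2 {V : Type*} {m : ℕ} (hm : 1 ≤ m)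
    (pos : (V ⊕ Fin m) → ℕ) (e : Fin m → V × V) : (V ⊕ Fin m) → Prop
  | Sum.inl v => ¬ pos (Sum.inr ⟨m - 1, by omega⟩) < pos (Sum.inl v)
  | Sum.inr j => ¬ (pos (Sum.inl (e j).1) < pos (Sum.inr j) ∨
      pos (Sum.inl (e j).2) < pos (Sum.inr j))

/-- `satisfiesP1 pos` says that the ordering given by `pos` makes every
reaction's reactants available: the reactants of each `r_v` are food,
and the reactants of `r'_j` are food except for `y_{j-1}` (for `j > 0`),
the product of `r'_{j-1}`, so (P1) holds iff each `r'_{j-1}` precedes `r'_j`. -/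
def satisfiesP1 {V : Type*} {m : ℕ}
    (pos : (V ⊕ Fin m) → ℕ) : Prop :=
  ∀ j : Fin m, ∀ _ : 0 < (j : ℕ),
    pos (Sum.inr ⟨(j : ℕ) - 1, by omega⟩) < pos (Sum.inr j)

lemma mono_aux {V : Type*} {m : ℕ} (pos : (V ⊕ Fin m) → ℕ)
    (hP1 : satisfiesP1 pos) :
    ∀ d (j : Fin m) (h : (j : ℕ) + d < m),
      pos (Sum.inr j) ≤ pos (Sum.inr ⟨(j : ℕ) + d, h⟩) := by
  intro d
  induction d with
  | zero => intro j h; simp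
  | succ d ih =>
    intro j h
    have h1 : (j : ℕ) + d < m := by omega
    have h2 := hP1 ⟨(j : ℕ) + d + 1, h⟩ (by simp)
    exact le_of_lt (lt_of_le_of_lt (ih j h1) h2)

theorem stmt_19 {V : Type*} [Fintype V] [DecidableEq V]
    (m K : ℕ) (hm : 1 ≤ m) (e : Fin m → V × V) :
    (∃ V' : Finset V, V'.card ≤ K ∧
        ∀ j : Fin m, (e j).1 ∈ V' ∨ (e j).2 ∈ V') ↔
    (∃ pos : (V ⊕ Fin m) → ℕ, Function.Injective pos ∧
        satisfiesP1 pos ∧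
        Set.ncard {r : V ⊕ Fin m | violatesP2 hm pos e r} ≤ K) := by
  classical
  constructor
  · rintro ⟨V', hcard, hcov⟩
    set n := Fintype.card V with hn
    set idx : V → ℕ := fun v => ((Fintype.equivFin V) v : ℕ) with hidxdef
    have hidx : Function.Injective idx := by
      intro a b h
      exact (Fintype.equivFin V).injective (Fin.ext h)
    have hidxlt : ∀ v, idx v < n := fun v => ((Fintype.equivFin V) v).isLt
    set pos : (V ⊕ Fin m) → ℕ :=
      Sum.elim (fun v => if v ∈ V' then idx v else n + m + idx v)
        (fun j => n + (j : ℕ)) with hpos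
    refine ⟨pos, ?_, ?_, ?_⟩
    · intro a b hab
      cases a with
      | inl va => cases b with
        | inl vb =>
          simp only [hpos, Sum.elim_inl] at hab
          have : idx va = idx vb := by
            split_ifs at hab with h1 h2 h2 <;>
              first | omega | (exfalso; have := hidxlt va; have := hidxlt vb; omega)
          exact congrArg Sum.inl (hidx this)
        | inr jb =>
          exfalso
          simp only [hpos, Sum.elim_inl, Sum.elim_inr] at hab
          have := hidxlt va
          have := jb.isLt
          split_ifs at hab <;> omega
      | inr ja => cases b with
        | inl vb =>
          exfalso
          simp only [hpos, Sum.elim_inl, Sum.elim_inr] at hab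
          have := hidxlt vb
          have := ja.isLt
          split_ifs at hab <;> omega
        | inr jb =>
          simp only [hpos, Sum.elim_inr] at hab
          exact congrArg Sum.inr (Fin.ext (by omega))
    · intro j hj
      simp only [hpos, Sum.elim_inr]
      omega
    · have hset : {r : V ⊕ Fin m | violatesP2 hm pos e r} = Sum.inl '' ↑V' := by
        ext r
        cases r with
        | inl v =>
          simp only [Set.mem_setOf_eq, violatesP2, hpos, Sum.elim_inl, Sum.elim_inr,
            Set.mem_image, Finset.mem_coe]
          constructor
          · intro hnl
            by_contra hv
            have hv' : v ∉ V' := fun h => hv ⟨v, h, rfl⟩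
            rw [if_neg hv'] at hnl
            omega
          · rintro ⟨w, hw, hwe⟩
            cases Sum.inl_injective hwe
            rw [if_pos hw]
            have := hidxlt v
            omega
        | inr j =>
          simp only [Set.mem_setOf_eq, violatesP2, hpos, Sum.elim_inl, Sum.elim_inr,
            Set.mem_image, Finset.mem_coe]
          constructor
          · intro hnl
            exfalso
            apply hnl
            rcases hcov j with h | h
            · left; rw [if_pos h]; have := hidxlt (e j).1; omega
            · right; rw [if_pos h]; have := hidxlt (e j).2; omega
          · rintro ⟨w, hw, h⟩; exact absurd h (by simp)
      rw [hset, Set.ncard_image_of_injective _ Sum.inl_injective, Set.ncard_coe_finset]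
      exact hcard
  · rintro ⟨pos, hinj, hP1, hK⟩
    set S : Set (V ⊕ Fin m) := {r | violatesP2 hm pos e r} with hS
    have hSfin : S.Finite := Set.toFinite S
    set f : (V ⊕ Fin m) → V := Sum.elim id (fun j => (e j).1) with hf
    refine ⟨hSfin.toFinset.image f, ?_, ?_⟩
    · calc (hSfin.toFinset.image f).card ≤ hSfin.toFinset.card := Finset.card_image_le
        _ = S.ncard := (Set.ncard_eq_toFinset_card S hSfin).symm
        _ ≤ K := hK
    · intro j
      by_cases hv : violatesP2 hm pos e (Sum.inr j)
      · left
        refine Finset.mem_image.mpr ⟨Sum.inr j, ?_, rfl⟩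
        simpa [hS] using hv
      · -- some endpoint is earlier
        have hor : pos (Sum.inl (e j).1) < pos (Sum.inr j) ∨
            pos (Sum.inl (e j).2) < pos (Sum.inr j) := by
          by_contra h
          exact hv h
        have hle : pos (Sum.inr j) ≤ pos (Sum.inr ⟨m - 1, by omega⟩) := by
          have := mono_aux pos hP1 (m - 1 - (j : ℕ)) j (by omega)
          have heq : (⟨(j : ℕ) + (m - 1 - (j : ℕ)), by omega⟩ : Fin m) =
              ⟨m - 1, by omega⟩ := Fin.ext (by simp; omega)
          rwa [heq] at this
        rcases hor with h | h
        · left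
          refine Finset.mem_image.mpr ⟨Sum.inl (e j).1, ?_, rfl⟩
          simp only [Set.Finite.mem_toFinset, hS, Set.mem_setOf_eq, violatesP2]
          omega
        · right
          refine Finset.mem_image.mpr ⟨Sum.inl (e j).2, ?_, rfl⟩
          simp only [Set.Finite.mem_toFinset, hS, Set.mem_setOf_eq, violatesP2]
          omega
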